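/- The formula (A, X) ∗ (π, Y) = (Aπ, A Y + 2 pr_{Aπ}(X)) defines a group action of SE(n) on the canonical vector bundle C_{n,p} = {(π, Y) : π a p-dimensional subspace of ℝⁿ, Y ∈ π}, i.e., (I,0) ∗ (π,Y) = (π,Y) and (g₁ g₂) ∗ (π,Y) = g₁ ∗ (g₂ ∗ (π,Y)). -/

import Mathlib

open Matrix

/-- The action `(A, X) ∗ (π, Y) = (Aπ, A Y + 2 pr_{Aπ}(X))` of a Euclidean
motion on a pair (subspace, vector). -/
noncomputable def bundleAct (n : ℕ)
    (g : Matrix (Fin n) (Fin n) ℝ × EuclideanSpace ℝ (Fin n))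
    (x : Submodule ℝ (EuclideanSpace ℝ (Fin n)) × EuclideanSpace ℝ (Fin n)) :
    Submodule ℝ (EuclideanSpace ℝ (Fin n)) × EuclideanSpace ℝ (Fin n) :=
  (x.1.map (Matrix.toEuclideanLin g.1),
    Matrix.toEuclideanLin g.1 x.2 +
      (2 : ℝ) • ((Submodule.orthogonalProjectionOnto (x.1.map (Matrix.toEuclideanLin g.1)) g.2 :
        x.1.map (Matrix.toEuclideanLin g.1)) : EuclideanSpace ℝ (Fin n)))

lemma toEuclideanLin_one' (n : ℕ) :
    Matrix.toEuclideanLin (1 : Matrix (Fin n) (Fin n) ℝ) = LinearMap.id := by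
  ext x
  simp [Matrix.toEuclideanLin_apply]

lemma toEuclideanLin_mul' (n : ℕ) (A B : Matrix (Fin n) (Fin n) ℝ) :
    Matrix.toEuclideanLin (A * B) =
      (Matrix.toEuclideanLin A).comp (Matrix.toEuclideanLin B) := by
  ext x
  simp [Matrix.toEuclideanLin_apply, Matrix.mulVec_mulVec]

lemma inner_toEuclideanLin (n : ℕ) (A : Matrix (Fin n) (Fin n) ℝ)
    (hA : Aᵀ * A = 1) (x y : EuclideanSpace ℝ (Fin n)) :
    inner ℝ (Matrix.toEuclideanLin A x) (Matrix.toEuclideanLin A y) = (inner ℝ x y : ℝ) := by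
  have h : Matrix.toEuclideanLin Aᵀ = LinearMap.adjoint (Matrix.toEuclideanLin A) := by
    simpa using Matrix.toEuclideanLin_conjTranspose_eq_adjoint (𝕜 := ℝ) A
  rw [← LinearMap.adjoint_inner_left, ← h, ← LinearMap.comp_apply, ← toEuclideanLin_mul',
    hA, toEuclideanLin_one', LinearMap.id_apply]

noncomputable def eucIsom (n : ℕ) (A : Matrix (Fin n) (Fin n) ℝ) (hA : Aᵀ * A = 1) :
    EuclideanSpace ℝ (Fin n) →ₗᵢ[ℝ] EuclideanSpace ℝ (Fin n) :=
  (Matrix.toEuclideanLin A).isometryOfInner (inner_toEuclideanLin n A hA)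

lemma proj_congr {𝕜 E : Type*} [RCLike 𝕜] [NormedAddCommGroup E] [InnerProductSpace 𝕜 E]
    {p₁ p₂ : Submodule 𝕜 E} [Submodule.HasOrthogonalProjection p₁] [Submodule.HasOrthogonalProjection p₂]
    (h : p₁ = p₂) (x : E) :
    ((Submodule.orthogonalProjectionOnto p₁ x : p₁) : E) = ((Submodule.orthogonalProjectionOnto p₂ x : p₂) : E) := by
  subst h; rfl

/-- the formula `(A,X) ∗ (π,Y) = (Aπ, AY + 2 pr_{Aπ} X)` defines a
group action of `SE(n)` on the canonical bundle
`C_{n,p} = {(π, Y) : π ∈ Gr(p,ℝⁿ), Y ∈ π}`: it preserves the bundle, fixes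
nothing more than required at the identity, and is compatible with the group
multiplication `(R₁,X₁)·(R₂,X₂) = (R₁R₂, X₁ + R₁X₂)`. -/
theorem bundleAct_is_action (n p : ℕ) (hp : 1 ≤ p) (hpn : p < n) :
    (∀ (A : Matrix (Fin n) (Fin n) ℝ) (X : EuclideanSpace ℝ (Fin n))
        (π : Submodule ℝ (EuclideanSpace ℝ (Fin n))) (Y : EuclideanSpace ℝ (Fin n)),
        Aᵀ * A = 1 → A.det = 1 → Module.finrank ℝ π = p → Y ∈ π →
        (bundleAct n (A, X) (π, Y)).2 ∈ (bundleAct n (A, X) (π, Y)).1) ∧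
    (∀ (π : Submodule ℝ (EuclideanSpace ℝ (Fin n))) (Y : EuclideanSpace ℝ (Fin n)),
        Y ∈ π → bundleAct n (1, 0) (π, Y) = (π, Y)) ∧
    (∀ (A₁ A₂ : Matrix (Fin n) (Fin n) ℝ) (X₁ X₂ : EuclideanSpace ℝ (Fin n))
        (π : Submodule ℝ (EuclideanSpace ℝ (Fin n))) (Y : EuclideanSpace ℝ (Fin n)),
        A₁ᵀ * A₁ = 1 → A₁.det = 1 → A₂ᵀ * A₂ = 1 → A₂.det = 1 →
        Module.finrank ℝ π = p → Y ∈ π →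
        bundleAct n (A₁ * A₂, X₁ + Matrix.toEuclideanLin A₁ X₂) (π, Y) =
          bundleAct n (A₁, X₁) (bundleAct n (A₂, X₂) (π, Y))) := by
  refine ⟨?_, ?_, ?_⟩
  · intro A X π Y _ _ _ hY
    exact Submodule.add_mem _ (Submodule.mem_map_of_mem hY)
      (Submodule.smul_mem _ _ (SetLike.coe_mem _))
  · intro π Y hY
    simp [bundleAct, toEuclideanLin_one', Submodule.map_id]
  · intro A₁ A₂ X₁ X₂ π Y h1 _ h2 _ _ hY
    have hmap : π.map (Matrix.toEuclideanLin (A₁ * A₂)) =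
        (π.map (Matrix.toEuclideanLin A₂)).map (Matrix.toEuclideanLin A₁) := by
      rw [toEuclideanLin_mul', Submodule.map_comp]
    refine Prod.ext hmap ?_
    simp only [bundleAct]
    have key : Matrix.toEuclideanLin A₁
        ((Submodule.orthogonalProjectionOnto (π.map (Matrix.toEuclideanLin A₂)) X₂ : π.map (Matrix.toEuclideanLin A₂)) : EuclideanSpace ℝ (Fin n)) =
        ((Submodule.orthogonalProjectionOnto ((π.map (Matrix.toEuclideanLin A₂)).map (Matrix.toEuclideanLin A₁)) (Matrix.toEuclideanLin A₁ X₂) :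
          (π.map (Matrix.toEuclideanLin A₂)).map (Matrix.toEuclideanLin A₁)) : EuclideanSpace ℝ (Fin n)) := by
      simpa [eucIsom, LinearMap.coe_isometryOfInner, LinearMap.isometryOfInner_toLinearMap]
        using (eucIsom n A₁ h1).map_starProjection (π.map (Matrix.toEuclideanLin A₂)) X₂
    have e1 := fun z => proj_congr (𝕜 := ℝ) hmap z
    have hv : Matrix.toEuclideanLin (A₁ * A₂) Y =
        Matrix.toEuclideanLin A₁ (Matrix.toEuclideanLin A₂ Y) := by
      rw [toEuclideanLin_mul']; rfl
    simp only [hv, e1, map_add, _root_.map_smul, Submodule.coe_add, Submodule.coe_smul, ← key, smul_add]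
    module
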